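/- Let n = 2s with s ≥ 1 and l ≥ 1, and let R be the quotient of ℚ[X_0, …, X_{n−1}] by the ideal generated by X_i^{l+1} for all i, with x_i the class of X_i. Setting w_i = x_i − x_{i−1} and γ = (−1)^l · binom(2l, l), one has the identity w_1^{2l} · w_3^{2l} · ⋯ · w_{2s−1}^{2l} = γ^s · x_0^l x_1^l ⋯ x_{2s−1}^l in R, and this element is nonzero. -/

import Mathlib

open Finset

/-- Key binomial computation: if `a^(l+1) = 0` and `b^(l+1) = 0` then
`(a - b)^(2l) = (-1)^l * C(2l,l) * a^l * b^l`. -/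
lemma key_sub_pow {A : Type*} [CommRing A] (a b : A) (l : ℕ)
    (ha : a ^ (l + 1) = 0) (hb : b ^ (l + 1) = 0) :
    (a - b) ^ (2 * l) = (-1 : A) ^ l * ((2 * l).choose l : A) * (a ^ l * b ^ l) := by
  rw [sub_pow]
  rw [Finset.sum_eq_single l]
  · have h1 : 2 * l - l = l := by omega
    have h2 : (-1 : A) ^ (l + 2 * l) = (-1) ^ l := by
      rw [pow_add]; simp [pow_mul]
    rw [h1, h2]; ring
  · intro k hk hkl
    rw [mem_range] at hk
    rcases lt_or_gt_of_ne hkl with h | h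
    · have : b ^ (2 * l - k) = 0 := by
        have : 2 * l - k = (l + 1) + (2 * l - k - (l + 1)) := by omega
        rw [this, pow_add, hb, zero_mul]
      simp [this]
    · have : a ^ k = 0 := by
        have : k = (l + 1) + (k - (l + 1)) := by omega
        rw [this, pow_add, ha, zero_mul]
      simp [this]
  · intro h
    exfalso; exact h (mem_range.mpr (by omega))

lemma prod_range_two_mul {M : Type*} [CommMonoid M] (s : ℕ) (f : ℕ → M) :
    ∏ i ∈ Finset.range (2 * s), f i
      = ∏ j ∈ Finset.range s, (f (2 * j) * f (2 * j + 1)) := by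
  induction s with
  | zero => simp
  | succ n ih =>
    rw [show 2 * (n + 1) = (2 * n + 1) + 1 by omega, prod_range_succ, prod_range_succ,
      prod_range_succ, ih, mul_assoc]

lemma prod_monomial_aux {σ : Type*} (t : Finset σ) (f : σ → (σ →₀ ℕ)) :
    ∏ i ∈ t, MvPolynomial.monomial (f i) (1 : ℚ)
      = MvPolynomial.monomial (∑ i ∈ t, f i) (1 : ℚ) := by
  classical
  induction t using Finset.induction with
  | empty => simp
  | insert _ _ h ih =>
    rw [Finset.prod_insert h, Finset.sum_insert h, ih, MvPolynomial.monomial_mul, mul_one]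

theorem complex_projective_even_product (s l : ℕ) (hs : 1 ≤ s) (hl : 1 ≤ l)
    (I : Ideal (MvPolynomial (Fin (2 * s)) ℚ))
    (hI : I = Ideal.span (Set.range fun i : Fin (2 * s) => MvPolynomial.X i ^ (l + 1)))
    (γ : ℚ) (hγ : γ = (-1 : ℚ) ^ l * (Nat.choose (2 * l) l : ℚ)) :
    ((∏ j : Fin s,
        (Ideal.Quotient.mk I (MvPolynomial.X ⟨2 * (j : ℕ) + 1, by have := j.isLt; omega⟩)
          - Ideal.Quotient.mk I
              (MvPolynomial.X ⟨2 * (j : ℕ), by have := j.isLt; omega⟩)) ^ (2 * l))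
      = γ ^ s • ∏ i : Fin (2 * s), (Ideal.Quotient.mk I (MvPolynomial.X i)) ^ l) ∧
    γ ^ s • ∏ i : Fin (2 * s), (Ideal.Quotient.mk I (MvPolynomial.X i)) ^ l ≠ 0 := by
  classical
  set mk := Ideal.Quotient.mk I with hmk
  have h2s : 0 < 2 * s := by omega
  -- the generators vanish in the quotient
  have hx0 : ∀ i : Fin (2 * s), (mk (MvPolynomial.X i)) ^ (l + 1) = 0 := by
    intro i
    rw [← map_pow, Ideal.Quotient.eq_zero_iff_mem, hI]
    exact Ideal.subset_span ⟨i, rfl⟩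
  -- a total indexing function
  set x : ℕ → MvPolynomial (Fin (2 * s)) ℚ ⧸ I := fun i => mk (MvPolynomial.X (⟨i % (2 * s), Nat.mod_lt _ h2s⟩ : Fin (2 * s)))
    with hxdef
  have hx : ∀ (i : ℕ) (h : i < 2 * s), x i = mk (MvPolynomial.X ⟨i, h⟩) := by
    intro i h
    simp only [hxdef]
    congr 1
    exact congrArg _ (Fin.ext (Nat.mod_eq_of_lt h))
  have hx0' : ∀ i : ℕ, (x i) ^ (l + 1) = 0 := fun i => hx0 _
  set c : MvPolynomial (Fin (2 * s)) ℚ ⧸ I := (-1 : MvPolynomial (Fin (2 * s)) ℚ ⧸ I) ^ l * ((2 * l).choose l : MvPolynomial (Fin (2 * s)) ℚ ⧸ I) with hc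
  -- main computation
  have hmain : (∏ j : Fin s,
        (mk (MvPolynomial.X ⟨2 * (j : ℕ) + 1, by have := j.isLt; omega⟩)
          - mk (MvPolynomial.X ⟨2 * (j : ℕ), by have := j.isLt; omega⟩)) ^ (2 * l))
      = c ^ s * ∏ i : Fin (2 * s), (mk (MvPolynomial.X i)) ^ l := by
    have step1 : (∏ j : Fin s,
        (mk (MvPolynomial.X ⟨2 * (j : ℕ) + 1, by have := j.isLt; omega⟩)
          - mk (MvPolynomial.X ⟨2 * (j : ℕ), by have := j.isLt; omega⟩)) ^ (2 * l))
        = ∏ j : Fin s, (x (2 * (j : ℕ) + 1) - x (2 * (j : ℕ))) ^ (2 * l) := by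
      apply Finset.prod_congr rfl
      intro j _
      rw [hx (2 * (j : ℕ) + 1) (by have := j.isLt; omega),
        hx (2 * (j : ℕ)) (by have := j.isLt; omega)]
    rw [step1]
    have step2 : ∏ j : Fin s, (x (2 * (j : ℕ) + 1) - x (2 * (j : ℕ))) ^ (2 * l)
        = ∏ j : Fin s, (c * (x (2 * (j : ℕ)) ^ l * x (2 * (j : ℕ) + 1) ^ l)) := by
      apply Finset.prod_congr rfl
      intro j _
      rw [key_sub_pow _ _ l (hx0' _) (hx0' _), hc]
      ring
    rw [step2, Finset.prod_mul_distrib, Finset.prod_const, Finset.card_univ, Fintype.card_fin]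
    congr 1
    have step3 : ∏ j : Fin s, (x (2 * (j : ℕ)) ^ l * x (2 * (j : ℕ) + 1) ^ l)
        = ∏ i ∈ Finset.range (2 * s), x i ^ l := by
      rw [Fin.prod_univ_eq_prod_range (fun j => x (2 * j) ^ l * x (2 * j + 1) ^ l),
        prod_range_two_mul s (fun i => x i ^ l)]
    rw [step3, ← Fin.prod_univ_eq_prod_range (fun i => x i ^ l)]
    apply Finset.prod_congr rfl
    intro i _
    rw [hx i i.isLt]
  -- relate c and γ via the algebra map
  have hcγ : ∀ k : ℕ, (γ ^ k • ·) = fun y : MvPolynomial (Fin (2 * s)) ℚ ⧸ I => c ^ k * y := by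
    intro k
    funext y
    obtain ⟨p, rfl⟩ := Ideal.Quotient.mk_surjective (I := I) y
    have h1 : γ ^ k • (Ideal.Quotient.mk I p) = Ideal.Quotient.mk I (γ ^ k • p) :=
      (Submodule.Quotient.mk_smul I (γ ^ k) p).symm
    refine h1.trans ?_
    rw [MvPolynomial.smul_eq_C_mul, map_mul, ← hmk]
    congr 1
    rw [hc, hγ]
    simp [map_pow, map_mul, map_neg, map_one, map_natCast]
  constructor
  · rw [show (γ ^ s • ∏ i : Fin (2 * s), (mk (MvPolynomial.X i)) ^ l)
      = c ^ s * ∏ i : Fin (2 * s), (mk (MvPolynomial.X i)) ^ l from congrFun (hcγ s) _]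
    exact hmain
  · -- nonzero part
    have hγ0 : γ ≠ 0 := by
      rw [hγ]
      exact mul_ne_zero (pow_ne_zero _ (by norm_num))
        (Nat.cast_ne_zero.mpr (Nat.choose_pos (by omega)).ne')
    have hγs : γ ^ s ≠ 0 := pow_ne_zero _ hγ0
    set m : Fin (2 * s) →₀ ℕ := ∑ i : Fin (2 * s), Finsupp.single i l with hm
    have hmi : ∀ i, m i = l := by
      intro i
      simp [hm, Finsupp.single_apply, Finset.sum_apply']
    have hpm : (∏ i : Fin (2 * s), (MvPolynomial.X i : MvPolynomial (Fin (2 * s)) ℚ) ^ l)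
        = MvPolynomial.monomial m 1 := by
      simp_rw [MvPolynomial.X_pow_eq_monomial]
      exact prod_monomial_aux _ _
    have hset : (Set.range fun i : Fin (2 * s) =>
          (MvPolynomial.X i : MvPolynomial (Fin (2 * s)) ℚ) ^ (l + 1))
        = (fun m => MvPolynomial.monomial m (1 : ℚ)) ''
            Set.range (fun i : Fin (2 * s) => Finsupp.single i (l + 1)) := by
      rw [← Set.range_comp]
      apply congrArg
      funext i
      simp [Function.comp, MvPolynomial.X_pow_eq_monomial]
    have heq : γ ^ s • (∏ i : Fin (2 * s), (mk (MvPolynomial.X i)) ^ l)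
        = Ideal.Quotient.mk I (MvPolynomial.monomial m (γ ^ s)) := by
      have hP : (∏ i : Fin (2 * s), (mk (MvPolynomial.X i)) ^ l)
          = Ideal.Quotient.mk I (∏ i : Fin (2 * s), MvPolynomial.X i ^ l) := by
        rw [hmk, map_prod]
        simp [map_pow]
      rw [hP]
      have h1 : γ ^ s • (Ideal.Quotient.mk I (∏ i : Fin (2 * s), MvPolynomial.X i ^ l))
          = Ideal.Quotient.mk I (γ ^ s • ∏ i : Fin (2 * s), MvPolynomial.X i ^ l) :=
        (Submodule.Quotient.mk_smul I _ _).symm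
      refine h1.trans ?_
      rw [MvPolynomial.smul_eq_C_mul, hpm, MvPolynomial.C_mul_monomial, mul_one]
    rw [heq, Ne, Ideal.Quotient.eq_zero_iff_mem, hI, hset,
      MvPolynomial.mem_ideal_span_monomial_image]
    push_neg
    refine ⟨m, ?_, ?_⟩
    · simp [MvPolynomial.support_monomial, hγs]
    · rintro si ⟨i, rfl⟩
      intro hle
      have := hle i
      rw [Finsupp.single_eq_same, hmi i] at this
      omega
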